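/- In the setting of Construction 1, the k×n polynomial matrix G(D) = G_0 + G_1 D is minimal: its overall constraint length is minimal among all generator matrices of the convolutional code generated by G(D). -/

import Mathlib

open Polynomial Matrix

/-- `N_0(a) = 1`, `N_{i+1}(a) = N_i(a)^q · a`. -/
def skewN (q : ℕ) {F : Type*} [Field F] : ℕ → F → F
  | 0, _ => 1
  | i + 1, a => (skewN q i a) ^ q * a

/-- `α = Σ_{j=0}^{k-1} λ^j b_j` (coordinates `(1, λ, …, λ^{k-1}, 0, …, 0)` in the basis `b`). -/
def alph (k : ℕ) {F : Type*} [Field F] (lam : F) (b : Fin (2 * k) → F) : F :=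
  ∑ j : Fin k, lam ^ (j : ℕ) * b (Fin.castLE (by omega) j)

/-- `β = Σ_{j=0}^{2k-1} λ^j b_j` (coordinates `(1, λ, …, λ^{2k-1})` in the basis `b`). -/
def bet (k : ℕ) {F : Type*} [Field F] (lam : F) (b : Fin (2 * k) → F) : F :=
  ∑ j : Fin (2 * k), lam ^ (j : ℕ) * b j

/-- `(G_0)_{r,i} = N_r(α_i^{q-1}) α_i = N_r(^{α_i} 1) α_i`. -/
def G0mat (q k n : ℕ) {F : Type*} [Field F] (lam : Fin n → F) (b : Fin (2 * k) → F) :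
    Matrix (Fin k) (Fin n) F :=
  Matrix.of fun r i => skewN q (r : ℕ) ((alph k (lam i) b) ^ (q - 1)) * alph k (lam i) b

/-- `(G_1)_{r,i} = N_r(β_i^{q-1} γ) β_i = N_r(^{β_i} γ) β_i`. -/
def G1mat (q k n : ℕ) {F : Type*} [Field F] (γ : F) (lam : Fin n → F)
    (b : Fin (2 * k) → F) : Matrix (Fin k) (Fin n) F :=
  Matrix.of fun r i => skewN q (r : ℕ) ((bet k (lam i) b) ^ (q - 1) * γ) * bet k (lam i) b

/-- The generator matrix `G(D) = G_0 + G_1 D` of Construction 1. -/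
noncomputable def GpolyMat (q k n : ℕ) {F : Type*} [Field F] (γ : F) (lam : Fin n → F)
    (b : Fin (2 * k) → F) : Matrix (Fin k) (Fin n) (Polynomial F) :=
  Matrix.of fun r i =>
    Polynomial.C (G0mat q k n lam b r i) + Polynomial.C (G1mat q k n γ lam b r i) * Polynomial.X

/-- The `i`-th row degree `ν_i = max_j deg g_{ij}(D)` of a polynomial matrix. -/
noncomputable def rowDeg {F : Type*} [Field F] {k n : ℕ}
    (G : Matrix (Fin k) (Fin n) (Polynomial F)) (i : Fin k) : ℕ :=
  Finset.univ.sup fun j => (G i j).natDegree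

/-- The overall constraint length `ν = Σ_i ν_i` of a polynomial matrix. -/
noncomputable def constraintLen {F : Type*} [Field F] {k n : ℕ}
    (G : Matrix (Fin k) (Fin n) (Polynomial F)) : ℕ :=
  ∑ i, rowDeg G i

/-- A generator matrix is minimal if its overall constraint length is minimal among all
generator matrices of the code it generates. -/
def IsMinimalGen {F : Type*} [Field F] {k n : ℕ}
    (G : Matrix (Fin k) (Fin n) (Polynomial F)) : Prop :=
  ∀ G' : Matrix (Fin k) (Fin n) (Polynomial F),
    LinearMap.range (Matrix.vecMulLinear G') = LinearMap.range (Matrix.vecMulLinear G) →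
    constraintLen G ≤ constraintLen G'

section Aux

variable {F : Type*} [Field F]

lemma skewN_ne_zero (q : ℕ) (r : ℕ) {x : F} (hx : x ≠ 0) : skewN q r x ≠ 0 := by
  induction r with
  | zero => simp [skewN]
  | succ r ih => exact mul_ne_zero (pow_ne_zero _ ih) hx

lemma skewN_mul (q : ℕ) (hq : 1 ≤ q) (x γ : F) (r : ℕ) :
    skewN q r (x ^ (q - 1) * γ) * x = γ ^ (∑ t ∈ Finset.range r, q ^ t) * x ^ q ^ r := by
  induction r with
  | zero => simp [skewN]
  | succ r ih =>
    have hx : x ^ (q - 1) * x = x ^ q := by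
      rw [← pow_succ]; congr 1; omega
    have hs : ∑ t ∈ Finset.range (r + 1), q ^ t = (∑ t ∈ Finset.range r, q ^ t) * q + 1 := by
      rw [Finset.sum_range_succ']
      simp [pow_succ, Finset.sum_mul]
    have h0 : skewN q (r + 1) (x ^ (q - 1) * γ) * x
        = (skewN q r (x ^ (q - 1) * γ) * x) ^ q * γ := by
      show skewN q r (x ^ (q - 1) * γ) ^ q * (x ^ (q - 1) * γ) * x = _
      rw [mul_pow, ← hx]
      ring
    rw [h0, ih, hs, mul_pow, ← pow_mul, ← pow_mul, pow_add, pow_one, pow_succ]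
    ring

lemma sum_pow_eq {m : ℕ} (hm : m ≠ 0) (hadd : ∀ x y : F, (x + y) ^ m = x ^ m + y ^ m)
    {ι : Type*} (s : Finset ι) (f : ι → F) : (∑ i ∈ s, f i) ^ m = ∑ i ∈ s, f i ^ m := by
  classical
  induction s using Finset.induction_on with
  | empty => simp [zero_pow hm]
  | insert a s h ih => rw [Finset.sum_insert h, Finset.sum_insert h, hadd, ih]

lemma root_filter_card_le [Fintype F] [DecidableEq F] {p : F[X]} (hp : p ≠ 0) :
    (Finset.univ.filter fun x => p.IsRoot x).card ≤ p.natDegree := by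
  classical
  have hsub : (Finset.univ.filter fun x => p.IsRoot x) ⊆ p.roots.toFinset := by
    intro x hx
    simp only [Finset.mem_filter] at hx
    simpa [Multiset.mem_toFinset, mem_roots', hp] using hx.2
  calc (Finset.univ.filter fun x => p.IsRoot x).card
      ≤ p.roots.toFinset.card := Finset.card_le_card hsub
    _ ≤ Multiset.card p.roots := p.roots.toFinset_card_le
    _ ≤ p.natDegree := p.card_roots'

lemma fixed_card [Fintype F] [DecidableEq F] {q N : ℕ} (hq : 3 ≤ q) (hN : 0 < N)
    (hF : Fintype.card F = q ^ N) :
    (Finset.univ.filter fun x : F => x ^ q = x).card = q := by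
  classical
  set f : F[X] := X ^ q - X with hf
  have hdegf : f.natDegree = q := by
    rw [hf, natDegree_sub_eq_left_of_natDegree_lt] <;> simp <;> omega
  have hf0 : f ≠ 0 := fun h => by simp [h] at hdegf; omega
  have hfe : (Finset.univ.filter fun x : F => x ^ q = x)
      = Finset.univ.filter fun x => f.IsRoot x := by
    ext x; simp [hf, IsRoot, sub_eq_zero]
  have hqN : 3 ≤ q ^ N := le_trans hq (Nat.le_self_pow hN.ne' q)
  set g : F[X] := X ^ (q ^ N) - X with hg
  have hdegg : g.natDegree = q ^ N := by
    rw [hg, natDegree_sub_eq_left_of_natDegree_lt] <;> simp <;> omega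
  have hg0 : g ≠ 0 := fun h => by simp [h] at hdegg; omega
  -- divisibility
  obtain ⟨m, hm⟩ : (q - 1) ∣ (q ^ N - 1) := by
    simpa using Nat.sub_dvd_pow_sub_pow q 1 N
  have hdvdp : ((X : F[X]) ^ (q - 1) - 1) ∣ (X ^ (q ^ N - 1) - 1) := by
    rw [hm, pow_mul]
    simpa using sub_dvd_pow_sub_pow ((X : F[X]) ^ (q - 1)) 1 m
  have hfg : f ∣ g := by
    have h1 : f = X * ((X : F[X]) ^ (q - 1) - 1) := by
      rw [hf, mul_sub, mul_one, ← pow_succ']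
      congr 2
      omega
    have h2 : g = X * ((X : F[X]) ^ (q ^ N - 1) - 1) := by
      rw [hg, mul_sub, mul_one, ← pow_succ']
      congr 2
      omega
    rw [h1, h2]
    exact mul_dvd_mul_left _ hdvdp
  obtain ⟨h, hgh⟩ := hfg
  have hh0 : h ≠ 0 := by rintro rfl; rw [mul_zero] at hgh; exact hg0 hgh
  have hdegh : h.natDegree = q ^ N - q := by
    have := hdegg
    rw [hgh, natDegree_mul hf0 hh0, hdegf] at this
    omega
  have hall : ∀ x : F, g.IsRoot x := by
    intro x
    have := FiniteField.pow_card x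
    rw [hF] at this
    simp [hg, IsRoot, this, sub_eq_zero]
  have hunion : (Finset.univ : Finset F) ⊆
      (Finset.univ.filter fun x => f.IsRoot x) ∪ (Finset.univ.filter fun x => h.IsRoot x) := by
    intro x _
    have := hall x
    rw [hgh] at this
    simp only [IsRoot, eval_mul, mul_eq_zero] at this
    rcases this with h' | h'
    · exact Finset.mem_union_left _ (Finset.mem_filter.mpr ⟨Finset.mem_univ _, h'⟩)
    · exact Finset.mem_union_right _ (Finset.mem_filter.mpr ⟨Finset.mem_univ _, h'⟩)
  have hcard : q ^ N ≤ (Finset.univ.filter fun x => f.IsRoot x).card + (q ^ N - q) := by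
    calc q ^ N = (Finset.univ : Finset F).card := by rw [Finset.card_univ, hF]
      _ ≤ ((Finset.univ.filter fun x => f.IsRoot x) ∪
            (Finset.univ.filter fun x => h.IsRoot x)).card := Finset.card_le_card hunion
      _ ≤ (Finset.univ.filter fun x => f.IsRoot x).card
            + (Finset.univ.filter fun x => h.IsRoot x).card := Finset.card_union_le _ _
      _ ≤ _ := by
          have := root_filter_card_le hh0
          rw [hdegh] at this
          omega
  have hub : (Finset.univ.filter fun x => f.IsRoot x).card ≤ q := by
    have := root_filter_card_le hf0
    omega
  rw [hfe]
  have hqle' : q ≤ q ^ N := Nat.le_self_pow hN.ne' q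
  omega

lemma vand_indep {k m : ℕ} (hkm : k ≤ m) (μ : Fin k → F) (hμ : Function.Injective μ)
    (c : Fin k → F) (hd : ∀ j : Fin m, ∑ i, c i * μ i ^ (j : ℕ) = 0) (i0 : Fin k) :
    c i0 = 0 := by
  classical
  set f : F[X] := ∏ i ∈ Finset.univ.erase i0, (X - C (μ i)) with hf
  have hk1 : 1 ≤ k := i0.pos
  have hdegf : f.natDegree < m := by
    have h1 : f.natDegree ≤ ∑ i ∈ Finset.univ.erase i0, (X - C (μ i)).natDegree :=
      natDegree_prod_le _ _
    have h2 : ∑ i ∈ Finset.univ.erase i0, (X - C (μ i)).natDegree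
        = (Finset.univ.erase i0).card := by
      simp [natDegree_X_sub_C]
    have h3 : (Finset.univ.erase i0).card = k - 1 := by
      rw [Finset.card_erase_of_mem (Finset.mem_univ _), Finset.card_univ, Fintype.card_fin]
    omega
  have key2 : ∑ i, c i * f.eval (μ i) = 0 := by
    have e1 : ∀ i, f.eval (μ i) = ∑ j : Fin m, f.coeff (j : ℕ) * μ i ^ (j : ℕ) := by
      intro i
      rw [eval_eq_sum_range' hdegf]
      exact (Fin.sum_univ_eq_sum_range _ m).symm
    calc ∑ i, c i * f.eval (μ i)
        = ∑ i, ∑ j : Fin m, c i * (f.coeff (j : ℕ) * μ i ^ (j : ℕ)) := by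
          refine Finset.sum_congr rfl fun i _ => ?_
          rw [e1, Finset.mul_sum]
      _ = ∑ j : Fin m, f.coeff (j : ℕ) * ∑ i, c i * μ i ^ (j : ℕ) := by
          rw [Finset.sum_comm]
          refine Finset.sum_congr rfl fun j _ => ?_
          rw [Finset.mul_sum]
          refine Finset.sum_congr rfl fun i _ => by ring
      _ = 0 := by simp [hd]
  have heval0 : ∀ i ∈ Finset.univ.erase i0, c i * f.eval (μ i) = 0 := by
    intro i hi
    have : f.eval (μ i) = 0 := by
      rw [hf, eval_prod]
      exact Finset.prod_eq_zero hi (by simp)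
    simp [this]
  have hsingle : ∑ i, c i * f.eval (μ i) = c i0 * f.eval (μ i0) := by
    rw [← Finset.add_sum_erase _ _ (Finset.mem_univ i0), Finset.sum_eq_zero heval0, add_zero]
  have hne : f.eval (μ i0) ≠ 0 := by
    rw [hf, eval_prod]
    refine Finset.prod_ne_zero_iff.mpr fun i hi => ?_
    simp only [eval_sub, eval_X, eval_C, sub_ne_zero]
    exact fun h => (Finset.mem_erase.mp hi).1 (hμ h.symm)
  have := hsingle ▸ key2
  exact (mul_eq_zero.mp this).resolve_right hne

lemma det_natDegree_le {k : ℕ} (M : Matrix (Fin k) (Fin k) F[X]) :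
    M.det.natDegree ≤ ∑ r, Finset.univ.sup fun j => (M r j).natDegree := by
  rw [Matrix.det_apply]
  refine natDegree_sum_le_of_forall_le _ _ fun σ _ => ?_
  have h1 : ((Equiv.Perm.sign σ) • ∏ i, M (σ i) i).natDegree = (∏ i, M (σ i) i).natDegree := by
    rcases Int.units_eq_one_or (Equiv.Perm.sign σ) with h | h <;>
      simp [h, Units.smul_def, natDegree_neg]
  rw [h1]
  refine (natDegree_prod_le _ _).trans ?_
  have h2 : ∑ i, (M (σ i) i).natDegree = ∑ r, (M r (σ.symm r)).natDegree := by
    refine Fintype.sum_equiv σ _ _ fun i => ?_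
    simp
  rw [h2]
  exact Finset.sum_le_sum fun r _ =>
    Finset.le_sup (f := fun j => (M r j).natDegree) (Finset.mem_univ (σ.symm r))

end Aux

/-- In Construction 1, the generator matrix `G(D) = G_0 + G_1 D` is minimal. -/
theorem construction_generator_minimal (q k n : ℕ)
    (hq : IsPrimePow q) (hq3 : 3 ≤ q) (hqn : n ≤ q) (hk : 0 < k) (hkn : k < n)
    (F : Type*) [Field F] [Fintype F] (hF : Fintype.card F = q ^ (2 * k))
    (γ : F) (hγ : orderOf γ = q ^ (2 * k) - 1)
    (lam : Fin n → F) (hlam : Function.Injective lam) (hlamq : ∀ i, (lam i) ^ q = lam i)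
    (b : Fin (2 * k) → F)
    (hbi : ∀ c : Fin (2 * k) → F, (∀ j, (c j) ^ q = c j) → ∑ j, c j * b j = 0 → ∀ j, c j = 0)
    (hbs : ∀ x : F, ∃ c : Fin (2 * k) → F, (∀ j, (c j) ^ q = c j) ∧ x = ∑ j, c j * b j) :
    IsMinimalGen (GpolyMat q k n γ lam b) := by
  classical
  intro G' hrange
  set G : Matrix (Fin k) (Fin n) (Polynomial F) := GpolyMat q k n γ lam b with hGdef
  have hq1 : 1 ≤ q := by omega
  have hq0 : q ≠ 0 := by omega
  -- characteristic
  obtain ⟨p, e, hpp, he, hpe⟩ := hq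
  have hp' : p.Prime := Nat.prime_iff.mpr hpp
  haveI : Fact p.Prime := ⟨hp'⟩
  haveI hchar : CharP F p := by
    obtain ⟨n0, hn0p, hn0⟩ := FiniteField.card F (ringChar F)
    rw [hF] at hn0
    have hdvd : ringChar F ∣ p ^ (e * (2 * k)) := by
      rw [pow_mul, hpe, hn0]
      exact dvd_pow_self _ n0.pos.ne'
    have : ringChar F = p :=
      (Nat.prime_dvd_prime_iff_eq hn0p hp').mp (hn0p.prime.dvd_of_dvd_pow hdvd)
    rw [← this]
    exact ringChar.charP F
  have hadd : ∀ x y : F, (x + y) ^ q = x ^ q + y ^ q := by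
    intro x y; rw [← hpe]; exact add_pow_char_pow x y p e
  have hsubq : ∀ x y : F, (x - y) ^ q = x ^ q - y ^ q := by
    intro x y; rw [← hpe]; exact sub_pow_char_pow x y e
  have haddr : ∀ (r : ℕ) (x y : F), (x + y) ^ q ^ r = x ^ q ^ r + y ^ q ^ r := by
    intro r x y
    rw [← hpe, ← pow_mul]
    exact add_pow_char_pow x y p (e * r)
  have hfix : ∀ (r : ℕ) {c : F}, c ^ q = c → c ^ q ^ r = c := by
    intro r c hc
    induction r with
    | zero => simp
    | succ r ih => rw [pow_succ, pow_mul, ih, hc]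
  have hγ0 : γ ≠ 0 := by
    intro h
    have h1 := pow_orderOf_eq_one γ
    rw [hγ, h, zero_pow] at h1
    · exact one_ne_zero h1.symm
    · have : 9 ≤ q ^ (2 * k) := by
        calc 9 = 3 ^ 2 := rfl
          _ ≤ q ^ (2 * k) := Nat.pow_le_pow_left hq3 2 |>.trans
              (Nat.pow_le_pow_right (by omega) (by omega))
      omega
  set S : Fin k → Fin n := Fin.castLE hkn.le with hSdef
  have hβ : ∀ i : Fin n, bet k (lam i) b ≠ 0 := by
    intro i h0
    have hcfix : ∀ j : Fin (2 * k), (lam i ^ (j : ℕ)) ^ q = lam i ^ (j : ℕ) := by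
      intro j
      rw [← pow_mul, mul_comm, pow_mul, hlamq]
    have := hbi (fun j => lam i ^ (j : ℕ)) hcfix h0 ⟨0, by omega⟩
    simpa using this
  -- independence of the first k betas over the fixed field
  have indep : ∀ c : Fin k → F, (∀ i, c i ^ q = c i) →
      (∑ i, c i * bet k (lam (S i)) b) = 0 → ∀ i, c i = 0 := by
    intro c hc hsum i0
    have hswap : ∑ j : Fin (2 * k), (∑ i, c i * lam (S i) ^ (j : ℕ)) * b j = 0 := by
      have hre : ∑ i, c i * bet k (lam (S i)) b
          = ∑ j : Fin (2 * k), (∑ i, c i * lam (S i) ^ (j : ℕ)) * b j := by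
        unfold bet
        simp only [Finset.mul_sum, Finset.sum_mul]
        rw [Finset.sum_comm]
        exact Finset.sum_congr rfl fun j _ => Finset.sum_congr rfl fun i _ => by ring
      rw [← hre, hsum]
    have hdfix : ∀ j : Fin (2 * k),
        (∑ i, c i * lam (S i) ^ (j : ℕ)) ^ q = ∑ i, c i * lam (S i) ^ (j : ℕ) := by
      intro j
      rw [sum_pow_eq hq0 hadd]
      refine Finset.sum_congr rfl fun i _ => ?_
      rw [mul_pow, hc, ← pow_mul, mul_comm (j : ℕ) q, pow_mul, hlamq]
    have hd := hbi _ hdfix hswap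
    exact vand_indep (by omega) (fun i => lam (S i)) (hlam.comp (Fin.castLE_injective _)) c hd i0
  -- the key k × k matrices
  set M1 : Matrix (Fin k) (Fin k) F := Matrix.of fun r i => G1mat q k n γ lam b r (S i) with hM1def
  set M0 : Matrix (Fin k) (Fin k) F := Matrix.of fun r i => G0mat q k n lam b r (S i) with hM0def
  have hM1entry : ∀ (r i : Fin k),
      M1 r i = γ ^ (∑ t ∈ Finset.range (r : ℕ), q ^ t) * bet k (lam (S i)) b ^ q ^ (r : ℕ) := by
    intro r i
    have := skewN_mul q hq1 (bet k (lam (S i)) b) γ (r : ℕ)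
    simpa [hM1def, G1mat] using this
  have hM1det : M1.det ≠ 0 := by
    intro hdet
    obtain ⟨v, hv0, hvM⟩ := Matrix.exists_vecMul_eq_zero_iff.mpr hdet
    set a : Fin k → F := fun r => v r * γ ^ (∑ t ∈ Finset.range (r : ℕ), q ^ t) with ha
    set L : Polynomial F := ∑ r : Fin k, Polynomial.C (a r) * Polynomial.X ^ q ^ (r : ℕ) with hLdef
    have hcol : ∀ i : Fin k, ∑ r, a r * bet k (lam (S i)) b ^ q ^ (r : ℕ) = 0 := by
      intro i
      have h1 := congrFun hvM i
      simp only [Matrix.vecMul, dotProduct, Pi.zero_apply] at h1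
      rw [← h1]
      refine Finset.sum_congr rfl fun r _ => ?_
      rw [hM1entry, ha]
      ring
    have hLroot : ∀ c : Fin k → F, (∀ i, c i ^ q = c i) →
        L.eval (∑ i, c i * bet k (lam (S i)) b) = 0 := by
      intro c hc
      have hev : L.eval (∑ i, c i * bet k (lam (S i)) b)
          = ∑ r : Fin k, a r * (∑ i, c i * bet k (lam (S i)) b) ^ q ^ (r : ℕ) := by
        simp [hLdef, eval_finset_sum]
      rw [hev]
      have hstep : ∀ r : Fin k, (∑ i, c i * bet k (lam (S i)) b) ^ q ^ (r : ℕ)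
          = ∑ i, c i * bet k (lam (S i)) b ^ q ^ (r : ℕ) := by
        intro r
        rw [sum_pow_eq (pow_ne_zero _ hq0) (haddr (r : ℕ))]
        refine Finset.sum_congr rfl fun i _ => ?_
        rw [mul_pow, hfix (r : ℕ) (hc i)]
      calc ∑ r : Fin k, a r * (∑ i, c i * bet k (lam (S i)) b) ^ q ^ (r : ℕ)
          = ∑ r : Fin k, ∑ i, a r * (c i * bet k (lam (S i)) b ^ q ^ (r : ℕ)) := by
            refine Finset.sum_congr rfl fun r _ => ?_
            rw [hstep, Finset.mul_sum]
        _ = ∑ i, c i * ∑ r, a r * bet k (lam (S i)) b ^ q ^ (r : ℕ) := by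
            rw [Finset.sum_comm]
            refine Finset.sum_congr rfl fun i _ => ?_
            rw [Finset.mul_sum]
            refine Finset.sum_congr rfl fun r _ => by ring
        _ = 0 := by simp [hcol]
    have hL0 : L = 0 := by
      by_contra hLne
      set Fq : Finset F := Finset.univ.filter (fun x => x ^ q = x) with hFqdef
      have hFqcard : Fq.card = q := fixed_card hq3 (by omega) hF
      set φ : (Fin k → F) → F := fun c => ∑ i, c i * bet k (lam (S i)) b with hφdef
      have hinj : Set.InjOn φ (Fintype.piFinset fun _ : Fin k => Fq) := by
        intro c hcm c' hcm' hcc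
        have hcf : ∀ i, c i ^ q = c i := fun i =>
          (Finset.mem_filter.mp (Fintype.mem_piFinset.mp hcm i)).2
        have hcf' : ∀ i, c' i ^ q = c' i := fun i =>
          (Finset.mem_filter.mp (Fintype.mem_piFinset.mp hcm' i)).2
        funext i
        have hdiff : ∑ j, (c j - c' j) * bet k (lam (S j)) b = 0 := by
          have : φ c - φ c' = 0 := by rw [hcc, sub_self]
          rw [hφdef] at this
          simp only [← Finset.sum_sub_distrib] at this
          rw [← this]
          exact Finset.sum_congr rfl fun j _ => by ring
        have := indep (fun j => c j - c' j)
          (fun j => by rw [hsubq, hcf, hcf']) hdiff i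
        exact sub_eq_zero.mp this
      have himg : (Fintype.piFinset fun _ : Fin k => Fq).image φ ⊆ L.roots.toFinset := by
        intro x hx
        obtain ⟨c, hcm, rfl⟩ := Finset.mem_image.mp hx
        have hcf : ∀ i, c i ^ q = c i := fun i =>
          (Finset.mem_filter.mp (Fintype.mem_piFinset.mp hcm i)).2
        rw [Multiset.mem_toFinset, mem_roots hLne]
        exact hLroot c hcf
      have hcard2 : q ^ k ≤ L.natDegree := by
        calc q ^ k = ((Fintype.piFinset fun _ : Fin k => Fq).image φ).card := by
              rw [Finset.card_image_of_injOn hinj, Fintype.card_piFinset]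
              simp [hFqcard]
          _ ≤ L.roots.toFinset.card := Finset.card_le_card himg
          _ ≤ Multiset.card L.roots := L.roots.toFinset_card_le
          _ ≤ L.natDegree := L.card_roots'
      have hcard3 : L.natDegree ≤ q ^ (k - 1) := by
        rw [hLdef]
        refine natDegree_sum_le_of_forall_le _ _ fun r _ => ?_
        refine (natDegree_C_mul_X_pow_le _ _).trans (Nat.pow_le_pow_right (by omega) ?_)
        omega
      have : q ^ k < q ^ k :=
        lt_of_le_of_lt (hcard2.trans hcard3) (Nat.pow_lt_pow_right (by omega) (by omega))
      exact lt_irrefl _ this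
    apply hv0
    funext r
    have hcoeff : L.coeff (q ^ (r : ℕ)) = a r := by
      rw [hLdef, finset_sum_coeff]
      rw [Finset.sum_eq_single r]
      · simp [coeff_C_mul_X_pow]
      · intro r' _ hr'
        rw [coeff_C_mul_X_pow, if_neg]
        intro h
        exact hr' (Fin.val_injective (Nat.pow_right_injective (by omega) h)).symm
      · intro h
        exact absurd (Finset.mem_univ r) h
    rw [hL0, coeff_zero] at hcoeff
    have := hcoeff.symm
    rw [ha] at this
    rcases mul_eq_zero.mp this with h | h
    · exact h
    · exact absurd h (pow_ne_zero _ hγ0)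
    -- the polynomial submatrix and its determinant
  set Gsub : Matrix (Fin k) (Fin k) (Polynomial F) := G.submatrix id S with hGsubdef
  have hGsubE : ∀ r j, Gsub r j
      = Polynomial.C (M0 r j) + Polynomial.C (M1 r j) * Polynomial.X := by
    intro r j
    rfl
  have hMu : IsUnit M1.det := isUnit_iff_ne_zero.mpr hM1det
  set N : Matrix (Fin k) (Fin k) F := M1⁻¹ * M0 with hNdef
  have hMN : M1 * N = M0 := Matrix.mul_nonsing_inv_cancel_left M1 M0 hMu
  have hfact : Gsub = M1.map Polynomial.C * Matrix.charmatrix (-N) := by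
    refine Matrix.ext fun r j => ?_
    rw [Matrix.mul_apply]
    have hT : ∀ i, Matrix.charmatrix (-N) i j
        = (if i = j then (Polynomial.X : Polynomial F) else 0) + Polynomial.C (N i j) := by
      intro i
      by_cases h : i = j
      · subst h
        rw [Matrix.charmatrix_apply_eq]
        simp [sub_eq_add_neg]
      · rw [Matrix.charmatrix_apply_ne _ _ _ h]
        simp [h]
    have h1 : ∑ i, (M1.map Polynomial.C) r i * (if i = j then (Polynomial.X : Polynomial F) else 0)
        = Polynomial.C (M1 r j) * Polynomial.X := by
      rw [Finset.sum_eq_single j]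
      · simp [Matrix.map_apply]
      · intro i _ hij
        simp [hij]
      · intro h
        exact absurd (Finset.mem_univ j) h
    have h2 : ∑ i, (M1.map Polynomial.C) r i * Polynomial.C (N i j)
        = Polynomial.C (M0 r j) := by
      rw [← hMN]
      rw [Matrix.mul_apply, map_sum]
      exact Finset.sum_congr rfl fun i _ => by simp [Matrix.map_apply]
    calc Gsub r j = Polynomial.C (M0 r j) + Polynomial.C (M1 r j) * Polynomial.X := hGsubE r j
      _ = ∑ i, (M1.map Polynomial.C) r i
            * ((if i = j then (Polynomial.X : Polynomial F) else 0) + Polynomial.C (N i j)) := by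
          rw [show (∑ i, (M1.map Polynomial.C) r i
            * ((if i = j then (Polynomial.X : Polynomial F) else 0) + Polynomial.C (N i j)))
            = (∑ i, (M1.map Polynomial.C) r i * (if i = j then (Polynomial.X : Polynomial F) else 0))
              + ∑ i, (M1.map Polynomial.C) r i * Polynomial.C (N i j) from by
              rw [← Finset.sum_add_distrib]
              exact Finset.sum_congr rfl fun i _ => mul_add _ _ _]
          rw [h1, h2, add_comm]
      _ = ∑ i, (M1.map Polynomial.C) r i * Matrix.charmatrix (-N) i j := by
          exact Finset.sum_congr rfl fun i _ => by rw [hT]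
  have hdetG : Gsub.det = Polynomial.C M1.det * (-N).charpoly := by
    rw [hfact, Matrix.det_mul]
    congr 1
    exact ((Polynomial.C : F →+* Polynomial F).map_det M1).symm
  have hCdet : (Polynomial.C M1.det : Polynomial F) ≠ 0 := by
    simpa using hM1det
  have hdegGsub : Gsub.det.natDegree = k := by
    rw [hdetG, natDegree_mul hCdet (Matrix.charpoly_monic _).ne_zero, natDegree_C,
      Matrix.charpoly_natDegree_eq_dim, Fintype.card_fin]
    omega
  have hdet0 : Gsub.det ≠ 0 := by
    rw [hdetG]
    exact mul_ne_zero hCdet (Matrix.charpoly_monic _).ne_zero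
  -- vecMul-injectivity of G
  have hinjG : ∀ v : Fin k → Polynomial F, v ᵥ* G = 0 → v = 0 := by
    intro v hv
    have hsub : v ᵥ* Gsub = 0 := by
      funext j
      have h1 := congrFun hv (S j)
      simp only [Matrix.vecMul, dotProduct, Pi.zero_apply] at h1 ⊢
      exact h1
    have h2 : v ᵥ* (Gsub * Gsub.adjugate) = 0 := by
      rw [← Matrix.vecMul_vecMul, hsub]
      simp
    rw [Matrix.mul_adjugate] at h2
    funext i
    have h3 := congrFun h2 i
    simp only [Matrix.vecMul, dotProduct, Matrix.smul_apply, Matrix.one_apply,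
      smul_eq_mul, Pi.zero_apply, mul_ite, mul_one, mul_zero, Finset.sum_ite_eq',
      Finset.mem_univ, if_true] at h3
    exact (mul_eq_zero.mp h3).resolve_right hdet0
  -- extract A and B
  have hexA : ∀ r : Fin k, ∃ w, w ᵥ* G' = G r := by
    intro r
    have hmem : G r ∈ LinearMap.range G.vecMulLinear := by
      refine ⟨Pi.single r 1, ?_⟩
      rw [Matrix.vecMulLinear_apply, Matrix.single_vecMul]
      funext j
      simp
    rw [← hrange] at hmem
    obtain ⟨w, hw⟩ := hmem
    exact ⟨w, by rw [← Matrix.vecMulLinear_apply, hw]⟩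
  have hexB : ∀ r : Fin k, ∃ w, w ᵥ* G = G' r := by
    intro r
    have hmem : G' r ∈ LinearMap.range G'.vecMulLinear := by
      refine ⟨Pi.single r 1, ?_⟩
      rw [Matrix.vecMulLinear_apply, Matrix.single_vecMul]
      funext j
      simp
    rw [hrange] at hmem
    obtain ⟨w, hw⟩ := hmem
    exact ⟨w, by rw [← Matrix.vecMulLinear_apply, hw]⟩
  choose A hA using hexA
  choose B hB using hexB
  have hAG : Matrix.of A * G' = G := by
    refine Matrix.ext fun r j => ?_
    rw [Matrix.mul_apply]
    have h1 := congrFun (hA r) j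
    simp only [Matrix.vecMul, dotProduct] at h1
    exact h1
  have hBG : Matrix.of B * G = G' := by
    refine Matrix.ext fun r j => ?_
    rw [Matrix.mul_apply]
    have h1 := congrFun (hB r) j
    simp only [Matrix.vecMul, dotProduct] at h1
    exact h1
  have hABG : (Matrix.of A * Matrix.of B) * G = G := by
    rw [Matrix.mul_assoc, hBG, hAG]
  have hAB1 : Matrix.of A * Matrix.of B = 1 := by
    have hrows : ∀ r : Fin k, (Matrix.of A * Matrix.of B) r
        = (1 : Matrix (Fin k) (Fin k) (Polynomial F)) r := by
      intro r
      have e1 : ((Matrix.of A * Matrix.of B) r) ᵥ* G = G r := by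
        funext j
        have h1 := congrFun (congrFun hABG r) j
        simp only [Matrix.vecMul, dotProduct]
        rw [← h1, Matrix.mul_apply]
      have e2 : ((1 : Matrix (Fin k) (Fin k) (Polynomial F)) r) ᵥ* G = G r := by
        funext j
        simp [Matrix.vecMul, dotProduct, Matrix.one_apply]
      have hz := hinjG ((Matrix.of A * Matrix.of B) r
          - (1 : Matrix (Fin k) (Fin k) (Polynomial F)) r) ?_
      · exact sub_eq_zero.mp hz
      · rw [Matrix.sub_vecMul, e1, e2, sub_self]
    refine Matrix.ext fun r j => ?_
    exact congrFun (hrows r) j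
  have hdetA : IsUnit (Matrix.of A).det := by
    have h1 := congrArg Matrix.det hAB1
    rw [Matrix.det_mul, Matrix.det_one] at h1
    exact IsUnit.of_mul_eq_one _ h1
  -- compare determinants through the column selection
  set G'sub : Matrix (Fin k) (Fin k) (Polynomial F) := G'.submatrix id S with hG'subdef
  have hGsubFac : Gsub = Matrix.of A * G'sub := by
    refine Matrix.ext fun r j => ?_
    have h1 := congrFun (congrFun hAG r) (S j)
    rw [Matrix.mul_apply] at h1
    rw [Matrix.mul_apply]
    exact h1.symm
  have hdG'0 : G'sub.det ≠ 0 := by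
    intro h
    rw [hGsubFac, Matrix.det_mul, h, mul_zero] at hdet0
    exact hdet0 rfl
  have hdg : k = G'sub.det.natDegree := by
    have h1 := hdegGsub
    rw [hGsubFac, Matrix.det_mul, natDegree_mul hdetA.ne_zero hdG'0,
      natDegree_eq_zero_of_isUnit hdetA] at h1
    omega
  -- constraint length of G is k
  have hcl : constraintLen G = k := by
    have hrd : ∀ r, rowDeg G r = 1 := by
      intro r
      have h1 : ∀ j, (G r j).natDegree = 1 := by
        intro j
        have hb1 : G1mat q k n γ lam b r j ≠ 0 :=
          mul_ne_zero (skewN_ne_zero q _ (mul_ne_zero (pow_ne_zero _ (hβ j)) hγ0)) (hβ j)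
        have he : G r j = Polynomial.C (G0mat q k n lam b r j)
            + Polynomial.C (G1mat q k n γ lam b r j) * Polynomial.X := rfl
        rw [he, add_comm, natDegree_add_C, natDegree_C_mul_X _ hb1]
      unfold rowDeg
      calc Finset.univ.sup (fun j => (G r j).natDegree)
          = Finset.univ.sup (fun _ : Fin n => 1) := by
            congr 1
            exact funext h1
        _ = 1 := Finset.sup_const ⟨⟨0, by omega⟩, Finset.mem_univ _⟩ 1
    unfold constraintLen
    simp [hrd]
  -- conclusion
  rw [hcl]
  calc k = G'sub.det.natDegree := hdg
    _ ≤ ∑ r, Finset.univ.sup (fun j => (G'sub r j).natDegree) := det_natDegree_le _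
    _ ≤ ∑ r, rowDeg G' r := by
        refine Finset.sum_le_sum fun r _ => ?_
        refine Finset.sup_le fun j _ => ?_
        exact Finset.le_sup (f := fun j => (G' r j).natDegree) (Finset.mem_univ (S j))
    _ = constraintLen G' := rfl
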